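/- For the complete graph K_n and a perturbation Δ > −1 of the weight of a single edge [i₀,j₀], the RP-1 distance between K_n and the perturbed graph is 4|Δ|/(n + 2Δ). -/

import Mathlib

open Matrix Finset

/-- `A` is a (weighted) adjacency matrix: symmetric, nonnegative, no self-loops. -/
def IsAdjMat {n : ℕ} (A : Matrix (Fin n) (Fin n) ℝ) : Prop :=
  A.IsSymm ∧ (∀ i j, 0 ≤ A i j) ∧ ∀ i, A i i = 0

/-- Combinatorial Laplacian `L = D - A`. -/
def lap {n : ℕ} (A : Matrix (Fin n) (Fin n) ℝ) : Matrix (Fin n) (Fin n) ℝ :=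
  Matrix.diagonal (fun i => ∑ j, A i j) - A

/-- Connectivity: the kernel of the Laplacian is spanned by the all-ones vector. -/
def IsConnectedLap {n : ℕ} (L : Matrix (Fin n) (Fin n) ℝ) : Prop :=
  ∀ v : Fin n → ℝ, L.mulVec v = 0 → ∃ c : ℝ, v = fun _ => c

/-- `Ld` is the Moore–Penrose pseudoinverse of `L`. -/
def IsMoorePenrose {n : ℕ} (L Ld : Matrix (Fin n) (Fin n) ℝ) : Prop :=
  L * Ld * L = L ∧ Ld * L * Ld = Ld ∧ (L * Ld)ᵀ = L * Ld ∧ (Ld * L)ᵀ = Ld * L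

/-- Effective resistance `R_ij = L†_ii + L†_jj - 2 L†_ij`. -/
def effR {n : ℕ} (Ld : Matrix (Fin n) (Fin n) ℝ) (i j : Fin n) : ℝ :=
  Ld i i + Ld j j - 2 * Ld i j

/-- Adjacency matrix of the unweighted complete graph `K_n`. -/
def completeAdj (n : ℕ) : Matrix (Fin n) (Fin n) ℝ :=
  Matrix.of fun i j => if i = j then 0 else 1

/-- Symmetric single-edge perturbation matrix: adds `Δ` to the weight of edge `[i₀, j₀]`. -/
def edgePert {n : ℕ} (i₀ j₀ : Fin n) (Δ : ℝ) : Matrix (Fin n) (Fin n) ℝ :=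
  Matrix.of fun i j => if (i = i₀ ∧ j = j₀) ∨ (i = j₀ ∧ j = i₀) then Δ else 0

/-- Adjacency matrix of the unweighted star graph `S_n` with hub the vertex of index 0. -/
def starAdj (n : ℕ) : Matrix (Fin n) (Fin n) ℝ :=
  Matrix.of fun i j => if i ≠ j ∧ (i.val = 0 ∨ j.val = 0) then 1 else 0

/-- Adjacency matrix of the unweighted path graph `P_n` on vertices `0, …, n-1`. -/
def pathAdj (n : ℕ) : Matrix (Fin n) (Fin n) ℝ :=
  Matrix.of fun i j => if i.val + 1 = j.val ∨ j.val + 1 = i.val then 1 else 0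

/-- Adjacency matrix of the unweighted cycle graph `C_n`. -/
def cycleAdj (n : ℕ) : Matrix (Fin n) (Fin n) ℝ :=
  Matrix.of fun i j => if (i.val + 1) % n = j.val ∨ (j.val + 1) % n = i.val then 1 else 0

lemma mp_unique {n : ℕ} {L M M' : Matrix (Fin n) (Fin n) ℝ}
    (h : IsMoorePenrose L M) (h' : IsMoorePenrose L M') : M = M' := by
  obtain ⟨h1, h2, h3, h4⟩ := h
  obtain ⟨h1', h2', h3', h4'⟩ := h'
  have key1 : L * M = L * M' := by
    have e1 : (L * M) * (L * M') = L * M' := by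
      calc (L * M) * (L * M') = (L * M * L) * M' := by noncomm_ring
      _ = L * M' := by rw [h1]
    have e2 : (L * M') * (L * M) = L * M := by
      calc (L * M') * (L * M) = (L * M' * L) * M := by noncomm_ring
      _ = L * M := by rw [h1']
    calc L * M = (L * M)ᵀ := h3.symm
    _ = ((L * M') * (L * M))ᵀ := by rw [e2]
    _ = (L * M)ᵀ * (L * M')ᵀ := by rw [transpose_mul]
    _ = (L * M) * (L * M') := by rw [h3, h3']
    _ = L * M' := e1
  have key2 : M * L = M' * L := by
    have e1 : (M' * L) * (M * L) = M' * L := by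
      calc (M' * L) * (M * L) = M' * (L * M * L) := by noncomm_ring
      _ = M' * L := by rw [h1]
    have e2 : (M * L) * (M' * L) = M * L := by
      calc (M * L) * (M' * L) = M * (L * M' * L) := by noncomm_ring
      _ = M * L := by rw [h1']
    calc M * L = (M * L)ᵀ := h4.symm
    _ = ((M * L) * (M' * L))ᵀ := by rw [e2]
    _ = (M' * L)ᵀ * (M * L)ᵀ := by rw [transpose_mul]
    _ = (M' * L) * (M * L) := by rw [h4, h4']
    _ = M' * L := e1
  calc M = M * L * M := h2.symm
  _ = M' * L * M := by rw [key2]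
  _ = M' * (L * M') := by rw [mul_assoc, key1]
  _ = M' := by rw [← mul_assoc, h2']


lemma mp_lemma {n : ℕ} (J E : Matrix (Fin n) (Fin n) ℝ) (N Δ c : ℝ)
    (hN : N ≠ 0)
    (hJJ : J * J = N • J) (hJE : J * E = 0) (hEJ : E * J = 0) (hEE : E * E = (2:ℝ) • E)
    (hJT : Jᵀ = J) (hET : Eᵀ = E)
    (hcoef : c * N^2 + 2 * (Δ * c) * N = Δ) :
    IsMoorePenrose (N • 1 - J + Δ • E) ((1/N) • 1 - (1/N^2) • J - c • E) := by
  set L : Matrix (Fin n) (Fin n) ℝ := N • 1 - J + Δ • E with hL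
  set M : Matrix (Fin n) (Fin n) ℝ := (1/N) • 1 - (1/N^2) • J - c • E with hM
  have hLM : L * M = 1 - (1/N) • J := by
    rw [hL, hM]
    simp only [Matrix.add_mul, Matrix.sub_mul, Matrix.mul_sub, Matrix.mul_add,
      Matrix.smul_mul, Matrix.mul_smul, hJJ, hJE, hEJ, hEE, Matrix.mul_one, Matrix.one_mul,
      smul_smul, smul_zero, sub_zero]
    match_scalars
    · field_simp
    · field_simp
      ring
    · field_simp
      linear_combination -hcoef
  have hLT : Lᵀ = L := by
    rw [hL]; simp [transpose_add, transpose_sub, transpose_smul, hJT, hET]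
  have hMT : Mᵀ = M := by
    rw [hM]; simp [transpose_sub, transpose_smul, hJT, hET]
  have hPT : (1 - (1/N) • J)ᵀ = (1 - (1/N) • J : Matrix (Fin n) (Fin n) ℝ) := by
    simp [transpose_sub, transpose_smul, hJT]
  have hML : M * L = 1 - (1/N) • J := by
    have := congrArg Matrix.transpose hLM
    rw [transpose_mul, hLT, hMT, hPT] at this
    exact this
  have hJL : J * L = 0 := by
    rw [hL]
    simp only [Matrix.mul_add, Matrix.mul_sub, Matrix.mul_smul, hJJ, hJE, Matrix.mul_one,
      smul_zero]
    abel
  have hJM : J * M = 0 := by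
    rw [hM]
    simp only [Matrix.mul_sub, Matrix.mul_smul, hJJ, hJE, Matrix.mul_one, smul_zero, smul_smul]
    match_scalars <;> field_simp <;> ring
  refine ⟨?_, ?_, ?_, ?_⟩
  · rw [hLM, Matrix.sub_mul, Matrix.one_mul, Matrix.smul_mul, hJL, smul_zero, sub_zero]
  · rw [hML, Matrix.sub_mul, Matrix.one_mul, Matrix.smul_mul, hJM, smul_zero, sub_zero]
  · rw [hLM]; exact hPT
  · rw [hML]; exact hPT


namespace RP1Aux

noncomputable def pVec {n : ℕ} (i₀ j₀ : Fin n) : Fin n → ℝ :=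
  fun i => (if i = i₀ then 1 else 0) - (if i = j₀ then 1 else 0)

def allOnes (n : ℕ) : Matrix (Fin n) (Fin n) ℝ := Matrix.of fun _ _ => 1

variable {n : ℕ} (i₀ j₀ : Fin n)

lemma sum_pVec (h : i₀ ≠ j₀) : ∑ i, pVec i₀ j₀ i = 0 := by
  simp [pVec, Finset.sum_sub_distrib]

lemma sum_pVec_sq (h : i₀ ≠ j₀) : ∑ i, (pVec i₀ j₀ i)^2 = 2 := by
  have key : ∀ i, (pVec i₀ j₀ i)^2
      = (if i = i₀ then (1:ℝ) else 0) + (if i = j₀ then 1 else 0) := by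
    intro i
    by_cases h1 : i = i₀ <;> by_cases h2 : i = j₀ <;> simp_all [pVec]
  rw [Finset.sum_congr rfl fun i _ => key i]
  simp [Finset.sum_add_distrib]
  norm_num

lemma lap_complete (hn : 0 < n) :
    lap (completeAdj n) = (n : ℝ) • (1 : Matrix (Fin n) (Fin n) ℝ) - allOnes n := by
  have key : ∀ i : Fin n, ∑ k, (if i = k then (0:ℝ) else 1) = (n : ℝ) - 1 := by
    intro i
    have h2 : ∀ k, (if i = k then (0:ℝ) else 1) = 1 - (if i = k then 1 else 0) := by
      intro k; by_cases h : i = k <;> simp [h]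
    simp [h2, Finset.sum_sub_distrib]
  ext i j
  by_cases h : i = j <;>
    simp [lap, completeAdj, allOnes, Matrix.diagonal, Matrix.one_apply, h, key]

lemma lap_add (A B : Matrix (Fin n) (Fin n) ℝ) : lap (A + B) = lap A + lap B := by
  ext i j
  by_cases h : i = j <;>
    simp [lap, Matrix.diagonal, h, Finset.sum_add_distrib] <;> ring

lemma lap_edgePert (h : i₀ ≠ j₀) (Δ : ℝ) :
    lap (edgePert i₀ j₀ Δ) = Δ • vecMulVec (pVec i₀ j₀) (pVec i₀ j₀) := by
  have hsum : ∀ i : Fin n, (∑ k, edgePert i₀ j₀ Δ i k)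
      = (if i = i₀ then Δ else 0) + (if i = j₀ then Δ else 0) := by
    intro i
    have key : ∀ k, edgePert i₀ j₀ Δ i k =
        (if k = j₀ then (if i = i₀ then Δ else 0) else 0)
          + (if k = i₀ then (if i = j₀ then Δ else 0) else 0) := by
      intro k
      by_cases h1 : i = i₀ <;> by_cases h2 : k = j₀ <;> by_cases h3 : i = j₀ <;>
        by_cases h4 : k = i₀ <;> simp_all [edgePert]
    rw [Finset.sum_congr rfl fun k _ => key k]
    rw [Finset.sum_add_distrib, Finset.sum_ite_eq' univ j₀, Finset.sum_ite_eq' univ i₀]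
    simp
  ext i j
  by_cases hij : i = j
  · subst hij
    have h0 : edgePert i₀ j₀ Δ i i = 0 := by
      by_cases h1 : i = i₀ <;> by_cases h2 : i = j₀ <;> simp_all [edgePert]
    simp only [lap, Matrix.sub_apply, Matrix.diagonal_apply_eq, hsum, h0, sub_zero,
      Matrix.smul_apply, vecMulVec_apply, smul_eq_mul, pVec]
    by_cases h1 : i = i₀ <;> by_cases h2 : i = j₀ <;> simp_all <;> ring
  · simp only [lap, Matrix.sub_apply, Matrix.diagonal_apply_ne _ hij, Matrix.smul_apply,
      vecMulVec_apply, smul_eq_mul, pVec, edgePert, Matrix.of_apply, zero_sub]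
    by_cases h1 : i = i₀ <;> by_cases h2 : i = j₀ <;> by_cases h3 : j = i₀ <;>
      by_cases h4 : j = j₀ <;> simp_all <;> ring

lemma JJ : allOnes n * allOnes n = (n : ℝ) • allOnes n := by
  ext i j; simp [allOnes, Matrix.mul_apply]

lemma JT : (allOnes n)ᵀ = allOnes n := by
  ext i j; simp [allOnes]

lemma ET : (vecMulVec (pVec i₀ j₀) (pVec i₀ j₀))ᵀ = vecMulVec (pVec i₀ j₀) (pVec i₀ j₀) := by
  ext i j; simp [vecMulVec_apply]; ring

lemma JE (h : i₀ ≠ j₀) : allOnes n * vecMulVec (pVec i₀ j₀) (pVec i₀ j₀) = 0 := by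
  ext i j
  simp [allOnes, Matrix.mul_apply, vecMulVec_apply, ← Finset.sum_mul, sum_pVec i₀ j₀ h]

lemma EJ (h : i₀ ≠ j₀) : vecMulVec (pVec i₀ j₀) (pVec i₀ j₀) * allOnes n = 0 := by
  ext i j
  simp [allOnes, Matrix.mul_apply, vecMulVec_apply, ← Finset.mul_sum, sum_pVec i₀ j₀ h]

lemma EE (h : i₀ ≠ j₀) : vecMulVec (pVec i₀ j₀) (pVec i₀ j₀) * vecMulVec (pVec i₀ j₀) (pVec i₀ j₀)
    = (2 : ℝ) • vecMulVec (pVec i₀ j₀) (pVec i₀ j₀) := by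
  ext i j
  have : ∀ k, pVec i₀ j₀ i * pVec i₀ j₀ k * (pVec i₀ j₀ k * pVec i₀ j₀ j)
      = (pVec i₀ j₀ k)^2 * (pVec i₀ j₀ i * pVec i₀ j₀ j) := by intro k; ring
  simp only [Matrix.mul_apply, vecMulVec_apply, Matrix.smul_apply, smul_eq_mul, this,
    ← Finset.sum_mul, sum_pVec_sq i₀ j₀ h]

end RP1Aux


/-- For the complete graph `K_n` and a perturbation `Δ > -1` of the weight of the single
edge `[i₀, j₀]`, the RP-1 distance between `K_n` and the perturbed graph is
`4|Δ|/(n + 2Δ)`. -/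
theorem rp1_complete_graph (n : ℕ) (hn : 3 ≤ n)
    (i₀ j₀ : Fin n) (hne : i₀ ≠ j₀) (Δ : ℝ) (hΔ : -1 < Δ)
    (Ld₁ Ld₂ : Matrix (Fin n) (Fin n) ℝ)
    (hMP₁ : IsMoorePenrose (lap (completeAdj n)) Ld₁)
    (hMP₂ : IsMoorePenrose (lap (completeAdj n + edgePert i₀ j₀ Δ)) Ld₂) :
    ∑ i, ∑ j, |effR Ld₁ i j - effR Ld₂ i j| = 4 * |Δ| / (n + 2 * Δ) := by
  have hN3 : (3:ℝ) ≤ (n:ℝ) := by exact_mod_cast hn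
  have hNpos : (0:ℝ) < (n:ℝ) := by linarith
  have hN : (n:ℝ) ≠ 0 := ne_of_gt hNpos
  have hden : (0:ℝ) < (n:ℝ) + 2*Δ := by linarith
  set e : Fin n → ℝ := RP1Aux.pVec i₀ j₀ with he
  set J : Matrix (Fin n) (Fin n) ℝ := RP1Aux.allOnes n with hJ
  set c : ℝ := Δ / ((n:ℝ) * ((n:ℝ) + 2*Δ)) with hc
  have hL1 : lap (completeAdj n) = (n:ℝ) • 1 - J := RP1Aux.lap_complete (by omega)
  have hL2 : lap (completeAdj n + edgePert i₀ j₀ Δ)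
      = (n:ℝ) • 1 - J + Δ • vecMulVec e e := by
    rw [RP1Aux.lap_add, hL1, RP1Aux.lap_edgePert i₀ j₀ hne]
  have hmp1 : IsMoorePenrose (lap (completeAdj n))
      ((1/(n:ℝ)) • 1 - (1/(n:ℝ)^2) • J - (0:ℝ) • vecMulVec e e) := by
    rw [hL1, show ((n:ℝ) • 1 - J : Matrix (Fin n) (Fin n) ℝ)
      = (n:ℝ) • 1 - J + (0:ℝ) • vecMulVec e e by simp]
    exact mp_lemma J (vecMulVec e e) (n:ℝ) 0 0 hN (RP1Aux.JJ) (RP1Aux.JE i₀ j₀ hne)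
      (RP1Aux.EJ i₀ j₀ hne) (RP1Aux.EE i₀ j₀ hne) (RP1Aux.JT) (RP1Aux.ET i₀ j₀) (by ring)
  have hmp2 : IsMoorePenrose (lap (completeAdj n + edgePert i₀ j₀ Δ))
      ((1/(n:ℝ)) • 1 - (1/(n:ℝ)^2) • J - c • vecMulVec e e) := by
    rw [hL2]
    refine mp_lemma J (vecMulVec e e) (n:ℝ) Δ c hN (RP1Aux.JJ) (RP1Aux.JE i₀ j₀ hne)
      (RP1Aux.EJ i₀ j₀ hne) (RP1Aux.EE i₀ j₀ hne) (RP1Aux.JT) (RP1Aux.ET i₀ j₀) ?_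
    rw [hc]
    have h2 : Δ / ((n:ℝ) * ((n:ℝ) + 2*Δ)) * ((n:ℝ) * ((n:ℝ) + 2*Δ)) = Δ :=
      div_mul_cancel₀ _ (mul_ne_zero hN hden.ne')
    linear_combination h2
  have hLd1 : Ld₁ = (1/(n:ℝ)) • 1 - (1/(n:ℝ)^2) • J - (0:ℝ) • vecMulVec e e :=
    mp_unique hMP₁ hmp1
  have hLd2 : Ld₂ = (1/(n:ℝ)) • 1 - (1/(n:ℝ)^2) • J - c • vecMulVec e e :=
    mp_unique hMP₂ hmp2
  have hdiff : ∀ i j : Fin n, effR Ld₁ i j - effR Ld₂ i j = c * (e i - e j)^2 := by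
    intro i j
    rw [hLd1, hLd2]
    simp only [effR, Matrix.sub_apply, Matrix.smul_apply, vecMulVec_apply, smul_eq_mul]
    ring
  have hsum0 : ∑ i, e i = 0 := RP1Aux.sum_pVec i₀ j₀ hne
  have hsum2 : ∑ i, (e i)^2 = 2 := RP1Aux.sum_pVec_sq i₀ j₀ hne
  have hsumsq : ∑ i : Fin n, ∑ j : Fin n, (e i - e j)^2 = 4 * (n:ℝ) := by
    have inner : ∀ i : Fin n, ∑ j, (e i - e j)^2 = (n:ℝ) * (e i)^2 + 2 := by
      intro i
      have expand : ∀ j : Fin n, (e i - e j)^2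
          = (e i)^2 + ((e j)^2 - (2 * e i) * e j) := fun j => by ring
      rw [Finset.sum_congr rfl fun j _ => expand j, Finset.sum_add_distrib,
        Finset.sum_sub_distrib, hsum2, ← Finset.mul_sum, hsum0, Finset.sum_const]
      simp [mul_comm]
    rw [Finset.sum_congr rfl fun i _ => inner i, Finset.sum_add_distrib,
      ← Finset.mul_sum, hsum2, Finset.sum_const]
    simp
    ring
  calc ∑ i, ∑ j, |effR Ld₁ i j - effR Ld₂ i j|
      = ∑ i : Fin n, ∑ j : Fin n, |c| * (e i - e j)^2 := by
        refine Finset.sum_congr rfl fun i _ => Finset.sum_congr rfl fun j _ => ?_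
        rw [hdiff i j, abs_mul, abs_of_nonneg (sq_nonneg (e i - e j))]
    _ = |c| * ∑ i : Fin n, ∑ j : Fin n, (e i - e j)^2 := by
        simp_rw [← Finset.mul_sum]
    _ = |c| * (4 * (n:ℝ)) := by rw [hsumsq]
    _ = 4 * |Δ| / (n + 2 * Δ) := by
        rw [hc, abs_div, abs_of_pos (mul_pos hNpos hden)]
        field_simp
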